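/- arXiv:1301.0374 — 5 statements merged into one kernel-verified Lean document; each statement's English description precedes it below -/
import Mathlib

section
/- The rank of the adjacency matrix of a tree T equals twice the matching number of T. -/
/-- The matching number of a graph: the largest size of a set of pairwise
disjoint edges. -/
noncomputable def matchingNumber {V : Type*} [Fintype V] (G : SimpleGraph V) : ℕ :=
  sSup {k : ℕ | ∃ M : Finset (Sym2 V), ↑M ⊆ G.edgeSet ∧
    (M : Set (Sym2 V)).Pairwise (fun e f => ∀ v : V, ¬(v ∈ e ∧ v ∈ f)) ∧ M.card = k}

section aux
open SimpleGraph Module Submodule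

lemma exists_leaf {V : Type*} [Fintype V] {G : SimpleGraph V} (hG : G.IsAcyclic)
    (he : ∃ a b : V, G.Adj a b) :
    ∃ u v : V, G.Adj u v ∧ ∀ w : V, G.Adj u w → w = v := by
  classical
  obtain ⟨a, b, hab⟩ := he
  set S : Set ℕ := {n | ∃ (x y : V) (p : G.Walk x y), p.IsPath ∧ p.length = n} with hS
  have h1 : (1 : ℕ) ∈ S := ⟨a, b, Walk.cons hab Walk.nil, by simp [Walk.isPath_def, hab.ne], by simp⟩
  have hbdd : BddAbove S := by
    refine ⟨Fintype.card V, ?_⟩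
    rintro n ⟨x, y, p, hp, rfl⟩
    exact le_of_lt hp.length_lt
  have hmem := Nat.sSup_mem ⟨1, h1⟩ hbdd
  obtain ⟨x, y, p, hp, hlen⟩ := hmem
  have hlen1 : 1 ≤ p.length := hlen ▸ le_csSup hbdd h1
  have hq : p.reverse.IsPath := hp.reverse
  have hql : p.reverse.length = sSup S := by simp [hlen]
  have hnn : ¬ p.reverse.Nil := by
    rw [Walk.nil_iff_length_eq, Walk.length_reverse]; omega
  obtain ⟨z, hyz, q, hr⟩ := Walk.not_nil_iff.mp hnn
  rw [hr] at hq hql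
  refine ⟨y, z, hyz, fun w hyw => ?_⟩
  by_cases hw : w ∈ (Walk.cons hyz q).support
  · by_cases hedge : s(y, w) ∈ (Walk.cons hyz q).edges
    · rw [Walk.edges_cons, List.mem_cons] at hedge
      rcases hedge with h' | h'
      · exact Sym2.congr_right.mp h'
      · exact absurd (Walk.fst_mem_support_of_mem_edges q h') (by
          have := hq
          rw [Walk.cons_isPath_iff] at this
          exact this.2)
    · exfalso
      have ht : ((Walk.cons hyz q).takeUntil w hw).IsPath := hq.takeUntil hw
      have hte : s(w, y) ∉ ((Walk.cons hyz q).takeUntil w hw).edges := by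
        intro h
        exact hedge (Walk.edges_takeUntil_subset _ _ (by rwa [Sym2.eq_swap] at h))
      exact hG _ ((Walk.cons_isCycle_iff _ hyw.symm).mpr ⟨ht, hte⟩)
  · exfalso
    have hp' : (Walk.cons hyw.symm (Walk.cons hyz q)).IsPath := by
      rw [Walk.cons_isPath_iff]; exact ⟨hq, hw⟩
    have : (Walk.cons hyw.symm (Walk.cons hyz q)).length ∈ S :=
      ⟨_, _, _, hp', rfl⟩
    have hle := le_csSup hbdd this
    simp only [Walk.length_cons] at hle hql
    omega


def mSet {V : Type*} [Fintype V] (G : SimpleGraph V) : Set ℕ :=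
  {k : ℕ | ∃ M : Finset (Sym2 V), ↑M ⊆ G.edgeSet ∧
    (M : Set (Sym2 V)).Pairwise (fun e f => ∀ v : V, ¬(v ∈ e ∧ v ∈ f)) ∧ M.card = k}

lemma matchingNumber_eq {V : Type*} [Fintype V] (G : SimpleGraph V) :
    matchingNumber G = sSup (mSet G) := rfl

lemma zero_mem_mSet {V : Type*} [Fintype V] (G : SimpleGraph V) : 0 ∈ mSet G :=
  ⟨∅, by simp, by simp, by simp⟩

lemma bddAbove_mSet {V : Type*} [Fintype V] (G : SimpleGraph V) : BddAbove (mSet G) := by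
  classical
  refine ⟨Fintype.card (Sym2 V), ?_⟩
  rintro k ⟨M, _, _, rfl⟩
  exact Finset.card_le_univ M

lemma matchingNumber_mem_mSet {V : Type*} [Fintype V] (G : SimpleGraph V) :
    matchingNumber G ∈ mSet G :=
  Nat.sSup_mem ⟨0, zero_mem_mSet G⟩ (bddAbove_mSet G)

lemma le_matchingNumber {V : Type*} [Fintype V] {G : SimpleGraph V} {k : ℕ}
    (hk : k ∈ mSet G) : k ≤ matchingNumber G :=
  le_csSup (bddAbove_mSet G) hk

section rec
variable {V : Type*} [Fintype V] [DecidableEq V] {G : SimpleGraph V} {u v : V}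

lemma matchingNumber_rec (huv : G.Adj u v) (hleaf : ∀ w, G.Adj u w → w = v) :
    matchingNumber G = matchingNumber (G.induce {x : V | x ≠ u ∧ x ≠ v}) + 1 := by
  classical
  set s : Set V := {x : V | x ≠ u ∧ x ≠ v} with hs
  set G' := G.induce s with hG'
  refine le_antisymm ?_ ?_
  · -- μ ≤ μ' + 1
    obtain ⟨M, hME, hMP, hMc⟩ := matchingNumber_mem_mSet G
    set K := M.filter (fun e => u ∈ e ∨ v ∈ e) with hK
    have hKv : ∀ e ∈ K, v ∈ e := by
      intro e heK
      rw [hK, Finset.mem_filter] at heK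
      obtain ⟨heM, hor⟩ := heK
      rcases hor with hu | hv
      · obtain hspec := Sym2.other_spec hu
        have hadj : G.Adj u (Sym2.Mem.other hu) := by
          rw [← SimpleGraph.mem_edgeSet, hspec]
          exact hME heM
        have := hleaf _ hadj
        rw [← hspec, this]
        simp
      · exact hv
    have hK1 : K.card ≤ 1 := by
      rw [Finset.card_le_one]
      intro e he f hf
      by_contra hne
      exact hMP (Finset.mem_coe.mpr (Finset.filter_subset _ _ he))
        (Finset.mem_coe.mpr (Finset.filter_subset _ _ hf)) hne v ⟨hKv e he, hKv f hf⟩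
    set M₂ := M \ K with hM₂
    have hM₂mem : ∀ e ∈ M₂, e ∈ G.edgeSet ∧ u ∉ e ∧ v ∉ e := by
      intro e he
      rw [hM₂, Finset.mem_sdiff] at he
      refine ⟨hME he.1, ?_, ?_⟩
      · intro hu; exact he.2 (Finset.mem_filter.mpr ⟨he.1, Or.inl hu⟩)
      · intro hv; exact he.2 (Finset.mem_filter.mpr ⟨he.1, Or.inr hv⟩)
    have hM₂card : M.card ≤ M₂.card + 1 := by
      have : M₂.card = M.card - K.card := by
        rw [hM₂, Finset.card_sdiff_of_subset (Finset.filter_subset _ _)]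
      have hKM : K.card ≤ M.card := Finset.card_le_card (Finset.filter_subset _ _)
      omega
    have hM₂s : ∀ e ∈ M₂, ∀ a ∈ e, a ∈ s := by
      intro e he a ha
      obtain ⟨_, hu, hv⟩ := hM₂mem e he
      exact ⟨fun h => hu (h ▸ ha), fun h => hv (h ▸ ha)⟩
    have hM₂M : ∀ e ∈ M₂, e ∈ M := fun e he => (Finset.mem_sdiff.mp he).1
    have key : M₂.card ≤ matchingNumber G' := by
      rcases Finset.eq_empty_or_nonempty M₂ with hemp | ⟨e₀, he₀⟩
      · simp [hemp]
      · obtain ⟨a₀, ha₀⟩ : ∃ a, a ∈ e₀ := by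
          induction e₀ using Sym2.ind with
          | _ x y => exact ⟨x, by simp⟩
        have hd : a₀ ∈ s := hM₂s e₀ he₀ a₀ ha₀
        set ρ : V → ↥s := fun x => if h : x ∈ s then ⟨x, h⟩ else ⟨a₀, hd⟩ with hρ
        have hρs : ∀ x (h : x ∈ s), ρ x = ⟨x, h⟩ := fun x h => by simp [hρ, h]
        have hρv : ∀ x, x ∈ s → ((ρ x : ↥s) : V) = x := by
          intro x h; rw [hρs x h]
        have hinv : ∀ e ∈ M₂, Sym2.map (Subtype.val : ↥s → V) (Sym2.map ρ e) = e := by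
          intro e he
          have hsub := hM₂s e he
          induction e using Sym2.ind with
          | _ x y =>
            rw [Sym2.map_pair_eq, Sym2.map_pair_eq,
              hρv x (hsub x (by simp)), hρv y (hsub y (by simp))]
        have hedge : ∀ (e : Sym2 V), e ∈ G.edgeSet → (∀ a ∈ e, a ∈ s) →
            Sym2.map ρ e ∈ G'.edgeSet := by
          intro e heE hsub
          induction e using Sym2.ind with
          | _ x y =>
            rw [Sym2.map_pair_eq, SimpleGraph.mem_edgeSet]
            have hadj : G.Adj x y := (SimpleGraph.mem_edgeSet G).mp heE
            have h1 := hρv x (hsub x (by simp))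
            have h2 := hρv y (hsub y (by simp))
            simp only [hG', SimpleGraph.comap_adj, Function.Embedding.coe_subtype, h1, h2]
            exact hadj
        have hmemback : ∀ e ∈ M₂, ∀ (x : ↥s), x ∈ Sym2.map ρ e → (x : V) ∈ e := by
          intro e he x hx
          rw [Sym2.mem_map] at hx
          obtain ⟨a, ha, rfl⟩ := hx
          rw [hρv a (hM₂s _ he a ha)]
          exact ha
        set M' := M₂.image (Sym2.map ρ) with hM'
        have hcard : M'.card = M₂.card := by
          rw [hM']
          apply Finset.card_image_of_injOn
          intro e he f hf hef
          rw [← hinv e he, ← hinv f hf, hef]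
        refine le_matchingNumber ⟨M', ?_, ?_, hcard⟩
        · intro e' he'
          rw [hM', Finset.coe_image] at he'
          obtain ⟨e, he, rfl⟩ := he'
          exact hedge e (hM₂mem e (Finset.mem_coe.mp he)).1 (hM₂s e (Finset.mem_coe.mp he))
        · intro e' he' f' hf' hne x hx
          rw [hM', Finset.coe_image] at he' hf'
          obtain ⟨e, he, rfl⟩ := he'
          obtain ⟨f, hf, rfl⟩ := hf'
          replace he := Finset.mem_coe.mp he
          replace hf := Finset.mem_coe.mp hf
          have hef : e ≠ f := fun h => hne (by rw [h])
          exact hMP (Finset.mem_coe.mpr (hM₂M e he)) (Finset.mem_coe.mpr (hM₂M f hf))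
            hef (x : V) ⟨hmemback e he x hx.1, hmemback f hf x hx.2⟩
    calc matchingNumber G = M.card := hMc.symm
      _ ≤ M₂.card + 1 := hM₂card
      _ ≤ matchingNumber G' + 1 := by omega
  · -- μ' + 1 ≤ μ
    obtain ⟨M', hME', hMP', hMc'⟩ := matchingNumber_mem_mSet G'
    set ι : ↥s → V := Subtype.val with hι
    set M := insert s(u, v) (M'.image (Sym2.map ι)) with hM
    have himg : ∀ e ∈ M'.image (Sym2.map ι), e ∈ G.edgeSet ∧ u ∉ e ∧ v ∉ e := by
      intro e he
      rw [Finset.mem_image] at he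
      obtain ⟨e', he', rfl⟩ := he
      have heE' : e' ∈ G'.edgeSet := hME' (Finset.mem_coe.mpr he')
      induction e' using Sym2.ind with
      | _ x y =>
        rw [SimpleGraph.mem_edgeSet] at heE'
        refine ⟨?_, ?_, ?_⟩
        · rw [Sym2.map_pair_eq, SimpleGraph.mem_edgeSet]
          simpa [hG'] using heE'
        · rw [Sym2.map_pair_eq, Sym2.mem_iff]
          rintro (h | h)
          · exact x.2.1 h.symm
          · exact y.2.1 h.symm
        · rw [Sym2.map_pair_eq, Sym2.mem_iff]
          rintro (h | h)
          · exact x.2.2 h.symm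
          · exact y.2.2 h.symm
    have huvnot : s(u, v) ∉ M'.image (Sym2.map ι) := by
      intro h
      exact (himg _ h).2.1 (by simp)
    have hcard : M.card = M'.card + 1 := by
      rw [hM, Finset.card_insert_of_notMem huvnot,
        Finset.card_image_of_injective _ (Sym2.map.injective Subtype.val_injective)]
    refine le_matchingNumber ⟨M, ?_, ?_, by rw [hcard, hMc']⟩
    · intro e he
      rw [hM, Finset.coe_insert] at he
      rcases he with rfl | he
      · rwa [SimpleGraph.mem_edgeSet]
      · exact (himg _ (Finset.mem_coe.mp he)).1
    · intro e he f hf hne x hx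
      rw [hM, Finset.coe_insert] at he hf
      rcases he with rfl | he <;> rcases hf with rfl | hf
      · exact hne rfl
      · rcases Sym2.mem_iff.mp hx.1 with rfl | rfl
        · exact (himg _ (Finset.mem_coe.mp hf)).2.1 hx.2
        · exact (himg _ (Finset.mem_coe.mp hf)).2.2 hx.2
      · rcases Sym2.mem_iff.mp hx.2 with rfl | rfl
        · exact (himg _ (Finset.mem_coe.mp he)).2.1 hx.1
        · exact (himg _ (Finset.mem_coe.mp he)).2.2 hx.1
      · -- both in image
        rw [Finset.mem_coe, Finset.mem_image] at he hf
        obtain ⟨e', he', rfl⟩ := he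
        obtain ⟨f', hf', rfl⟩ := hf
        have hef : e' ≠ f' := fun h => hne (by rw [h])
        obtain ⟨a, ha, hax⟩ := Sym2.mem_map.mp hx.1
        obtain ⟨b, hb, hbx⟩ := Sym2.mem_map.mp hx.2
        have hab : a = b := Subtype.val_injective (hax.trans hbx.symm)
        exact hMP' (Finset.mem_coe.mpr he') (Finset.mem_coe.mpr hf') hef a ⟨ha, hab ▸ hb⟩

end rec

variable {V : Type*} [Fintype V] [DecidableEq V] {G : SimpleGraph V} [DecidableRel G.Adj]
  {u v : V}

lemma rank_rec [DecidableRel (G.induce {x : V | x ≠ u ∧ x ≠ v}).Adj]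
    (huv : G.Adj u v) (hleaf : ∀ w, G.Adj u w → w = v) :
    (G.adjMatrix ℚ).rank = ((G.induce {x : V | x ≠ u ∧ x ≠ v}).adjMatrix ℚ).rank + 2 := by
  classical
  set s : Set V := {x : V | x ≠ u ∧ x ≠ v} with hs
  set A := G.adjMatrix ℚ with hA
  set B := (G.induce s).adjMatrix ℚ with hB
  have hune : u ≠ v := huv.ne
  -- the extension-by-zero linear map
  set φ : (↥s → ℚ) →ₗ[ℚ] (V → ℚ) :=
    { toFun := fun g x => if h : x ∈ s then g ⟨x, h⟩ else 0
      map_add' := by intro g h; funext x; by_cases hx : x ∈ s <;> simp [hx]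
      map_smul' := by intro c g; funext x; by_cases hx : x ∈ s <;> simp [hx] } with hφ
  have hφapp : ∀ (g : ↥s → ℚ) (x : V), φ g x = if h : x ∈ s then g ⟨x, h⟩ else 0 := by
    intro g x; rfl
  have hφinj : Function.Injective φ := by
    intro g h hgh
    funext x
    have := congrFun hgh (x : V)
    rw [hφapp, hφapp] at this
    simpa [x.2] using this
  have hAu : ∀ w, A u w = if w = v then 1 else 0 := by
    intro w
    by_cases hw : w = v
    · simp [hA, hw, huv]
    · simp only [hA, adjMatrix_apply, if_neg hw]
      rw [if_neg]
      intro had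
      exact hw (hleaf w had)
  have hAxu : ∀ x, x ∈ s → A x u = 0 := by
    intro x hx
    simp only [hA, adjMatrix_apply]
    rw [if_neg]
    intro had
    exact hx.2 (hleaf x had.symm)
  -- the key row identity
  have hrow : ∀ (x : ↥s), φ (B x) = A (x : V) - (A (x : V) v) • A u := by
    intro x
    funext w
    rw [hφapp]
    by_cases hw : w ∈ s
    · have hwu : w ≠ u := hw.1
      have hwv : w ≠ v := hw.2
      simp only [Pi.sub_apply, Pi.smul_apply, smul_eq_mul, hAu w, if_neg hwv, mul_zero, sub_zero]
      rw [dif_pos hw]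
      simp [hB, hA, adjMatrix_apply]
    · rw [dif_neg hw]
      have : w = u ∨ w = v := by
        by_contra hc
        push_neg at hc
        exact hw ⟨hc.1, hc.2⟩
      simp only [Pi.sub_apply, Pi.smul_apply, smul_eq_mul, hAu w]
      rcases this with rfl | rfl
      · rw [if_neg hune, hAxu (x : V) x.2]
        ring
      · rw [if_pos rfl]
        ring
  -- span equality
  have hspan : span ℚ (Set.range A) =
      span ℚ ({A u, A v} : Set (V → ℚ)) ⊔ Submodule.map φ (span ℚ (Set.range B)) := by
    rw [Submodule.map_span, ← Submodule.span_union]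
    apply le_antisymm
    · rw [span_le]
      rintro - ⟨x, rfl⟩
      by_cases hxu : x = u
      · exact subset_span (Or.inl (by simp [hxu]))
      by_cases hxv : x = v
      · exact subset_span (Or.inl (by simp [hxv]))
      · have hx : x ∈ s := ⟨hxu, hxv⟩
        have := hrow ⟨x, hx⟩
        have hx' : A x = φ (B ⟨x, hx⟩) + (A x v) • A u := by
          rw [this]; abel
        rw [hx']
        refine add_mem (subset_span ?_) (smul_mem _ _ (subset_span ?_))
        · exact Or.inr ⟨B ⟨x, hx⟩, ⟨⟨x, hx⟩, rfl⟩, rfl⟩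
        · exact Or.inl (by simp)
    · rw [span_le]
      rintro x hx
      rcases hx with (rfl | rfl) | ⟨-, ⟨y, rfl⟩, rfl⟩
      · exact subset_span ⟨u, rfl⟩
      · exact subset_span ⟨v, rfl⟩
      · rw [hrow y]
        exact sub_mem (subset_span ⟨y, rfl⟩) (smul_mem _ _ (subset_span ⟨u, rfl⟩))
  -- dimension counting
  set P := span ℚ ({A u, A v} : Set (V → ℚ)) with hP
  set Q := Submodule.map φ (span ℚ (Set.range B)) with hQ
  have hQ0 : ∀ y ∈ Q, y u = 0 ∧ y v = 0 := by
    rintro - ⟨g, -, rfl⟩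
    constructor
    · rw [hφapp]; rw [dif_neg]; intro h; exact h.1 rfl
    · rw [hφapp]; rw [dif_neg]; intro h; exact h.2 rfl
  have hAuu : A u u = 0 := by rw [hAu u, if_neg hune]
  have hAuv : A u v = 1 := by rw [hAu v, if_pos rfl]
  have hAvv : A v v = 0 := by simp [hA]
  have hAvu : A v u = 1 := by simp [hA, huv.symm]
  have hdisj : P ⊓ Q = ⊥ := by
    rw [eq_bot_iff]
    rintro y ⟨hyP, hyQ⟩
    obtain ⟨a, b, hab⟩ := Submodule.mem_span_pair.mp hyP
    obtain ⟨hyu, hyv⟩ := hQ0 y hyQ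
    have h1 : a = 0 := by
      have := congrFun hab v
      simpa [hAuv, hAvv, hyv] using this
    have h2 : b = 0 := by
      have := congrFun hab u
      simpa [hAuu, hAvu, hyu] using this
    rw [← hab, h1, h2]
    simp
  have hPfin : finrank ℚ P = 2 := by
    have hli : LinearIndependent ℚ ![A u, A v] := by
      rw [LinearIndependent.pair_iff]
      intro a b hab
      constructor
      · have := congrFun hab v
        simpa [hAuv, hAvv] using this
      · have := congrFun hab u
        simpa [hAuu, hAvu] using this
    have h2 := finrank_span_eq_card hli
    have hr : Set.range ![A u, A v] = ({A u, A v} : Set (V → ℚ)) := by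
      simp [Matrix.range_cons, Matrix.range_empty]
      exact Set.pair_comm _ _
    rw [hr, Fintype.card_fin] at h2
    exact h2
  have hQfin : finrank ℚ Q = finrank ℚ (span ℚ (Set.range B)) := by
    rw [hQ]
    exact (LinearEquiv.finrank_eq (Submodule.equivMapOfInjective φ hφinj _)).symm
  have hsum : finrank ℚ ↥(P ⊔ Q) = finrank ℚ P + finrank ℚ Q := by
    have := Submodule.finrank_sup_add_finrank_inf_eq P Q
    rw [hdisj, finrank_bot] at this
    omega
  have hAT : Matrix.transpose A = A := transpose_adjMatrix G
  have hBT : Matrix.transpose B = B := transpose_adjMatrix _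
  have hfinal : finrank ℚ ↥(span ℚ (Set.range (Matrix.transpose A))) =
      finrank ℚ ↥(span ℚ (Set.range (Matrix.transpose B))) + 2 := by
    rw [hAT, hBT, hspan, hsum, hPfin, hQfin]
    omega
  rw [Matrix.rank_eq_finrank_span_cols, Matrix.rank_eq_finrank_span_cols]
  unfold Matrix.col
  rename_i i1 i2
  have hBB : @adjMatrix ℚ _ (G.induce {x : V | x ≠ u ∧ x ≠ v}) i1 _ _ = B := by
    rw [hB]; exact congrArg (fun i => @adjMatrix ℚ _ _ i _ _) (Subsingleton.elim i1 i2)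
  rw [← hBB] at hfinal
  exact hfinal

lemma edgeless_case {V : Type*} [Fintype V] (G : SimpleGraph V) [DecidableRel G.Adj]
    (hE : ¬∃ a b : V, G.Adj a b) :
    (G.adjMatrix ℚ).rank = 2 * matchingNumber G := by
  push_neg at hE
  have hA : G.adjMatrix ℚ = 0 := by
    ext i j
    simp [SimpleGraph.adjMatrix_apply, hE i j]
  have hES : ∀ e, e ∉ G.edgeSet := by
    intro e
    induction e using Sym2.ind with
    | _ x y =>
      rw [SimpleGraph.mem_edgeSet]
      exact hE x y
  have hμ : matchingNumber G = 0 := by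
    obtain ⟨M, hME, -, hc⟩ := matchingNumber_mem_mSet G
    rw [← hc, Finset.card_eq_zero, Finset.eq_empty_iff_forall_notMem]
    intro e he
    exact hES e (hME (Finset.mem_coe.mpr he))
  rw [hA, hμ, Matrix.rank_zero]

universe u

lemma main_aux : ∀ (n : ℕ) (V : Type u) [Fintype V] [DecidableEq V] (G : SimpleGraph V)
    [DecidableRel G.Adj], Fintype.card V ≤ n → G.IsAcyclic →
    (G.adjMatrix ℚ).rank = 2 * matchingNumber G := by
  intro n
  induction n with
  | zero =>
    intro V _ _ G _ hcard _
    apply edgeless_case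
    rintro ⟨a, b, -⟩
    have : Fintype.card V = 0 := Nat.le_zero.mp hcard
    exact (Fintype.card_eq_zero_iff.mp this).false a
  | succ n ih =>
    intro V _ _ G _ hcard hG
    by_cases hE : ∃ a b : V, G.Adj a b
    · obtain ⟨u, v, huv, hleaf⟩ := exists_leaf hG hE
      set s : Set V := {x : V | x ≠ u ∧ x ≠ v} with hs
      haveI : DecidableRel (G.induce s).Adj := fun a b =>
        inferInstanceAs (Decidable (G.Adj a b))
      have hG' : (G.induce s).IsAcyclic := by
        intro x c hc
        set f : G.induce s →g G := ⟨fun a => (a : V), fun h => h⟩ with hfdef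
        have hf : Function.Injective ⇑f := Subtype.val_injective
        exact hG (c.map f) (SimpleGraph.Walk.IsCycle.map hf hc)
      have hcard' : Fintype.card ↥s ≤ n := by
        have hlt : Fintype.card ↥s < Fintype.card V := by
          apply Fintype.card_subtype_lt (x := u)
          intro h
          exact h.1 rfl
        omega
      have hr := rank_rec (G := G) huv hleaf
      have hm := matchingNumber_rec (G := G) huv hleaf
      have hih := ih ↥s (G.induce s) hcard' hG'
      rw [hr, hm, hih]
      ring
    · exact edgeless_case G hE

end aux

theorem rank_tree_eq_two_mul_matchingNumber {V : Type*} [Fintype V]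
    (G : SimpleGraph V) [DecidableRel G.Adj] (hT : G.IsTree) :
    (G.adjMatrix ℚ).rank = 2 * matchingNumber G := by
  classical
  exact main_aux (Fintype.card V) V G le_rfl hT.2
end

section
/- Let G be a finite simple graph and let u, v be distinct vertices of G with the same neighborhood (in particular u and v are non-adjacent). Then the rank of the adjacency matrix of G equals the rank of the adjacency matrix of the induced subgraph obtained by deleting v. -/
open Module

/-- Deleting a row that duplicates another row does not change the rank. -/
lemma rank_delete_duplicate_row {V n : Type*} [Fintype V] [Fintype n] [DecidableEq V]
    (A : Matrix V n ℚ) (u v : V) (huv : u ≠ v) (h : A v = A u) :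
    (A.submatrix ((↑) : {w : V // w ≠ v} → V) id).rank = A.rank := by
  rw [Matrix.rank_eq_finrank_span_row, Matrix.rank_eq_finrank_span_row]
  have hspan : Submodule.span ℚ (Set.range (A.submatrix ((↑) : {w : V // w ≠ v} → V) id))
      = Submodule.span ℚ (Set.range A) := by
    apply le_antisymm
    · apply Submodule.span_mono
      rintro x ⟨w, rfl⟩
      exact ⟨(w : V), rfl⟩
    · rw [Submodule.span_le]
      rintro x ⟨w, rfl⟩
      by_cases hw : w = v
      · subst hw
        rw [h]
        exact Submodule.subset_span ⟨⟨u, huv⟩, rfl⟩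
      · exact Submodule.subset_span ⟨⟨w, hw⟩, rfl⟩
  change finrank ℚ (Submodule.span ℚ (Set.range (A.submatrix ((↑) : {w : V // w ≠ v} → V) id)))
    = finrank ℚ (Submodule.span ℚ (Set.range A))
  rw [hspan]

theorem rank_delete_duplicate_vertex {V : Type*} [Fintype V] [DecidableEq V]
    (G : SimpleGraph V) [DecidableRel G.Adj] (u v : V) (huv : u ≠ v)
    (hN : G.neighborSet u = G.neighborSet v) :
    (G.adjMatrix ℚ).rank
      = ((G.adjMatrix ℚ).submatrix ((↑) : {w : V // w ≠ v} → V)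
          ((↑) : {w : V // w ≠ v} → V)).rank := by
  set M := G.adjMatrix ℚ with hM
  have hadj : ∀ w, G.Adj v w ↔ G.Adj u w := by
    intro w
    have := Set.ext_iff.mp hN w
    simpa [SimpleGraph.mem_neighborSet] using this.symm
  have hrow : M v = M u := by
    funext w
    simp only [hM, SimpleGraph.adjMatrix_apply]
    rw [if_congr (hadj w) rfl rfl]
  have h1 : (M.submatrix ((↑) : {w : V // w ≠ v} → V) id).rank = M.rank :=
    rank_delete_duplicate_row M u v huv hrow
  set B := Matrix.transpose (M.submatrix ((↑) : {w : V // w ≠ v} → V) id) with hB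
  have hcol : B v = B u := by
    funext w
    simp only [hB, Matrix.transpose_apply, Matrix.submatrix_apply, id_eq, hM,
      SimpleGraph.adjMatrix_apply]
    rw [if_congr ⟨fun hx => ((hadj _).mp hx.symm).symm, fun hx => ((hadj _).mpr hx.symm).symm⟩
      rfl rfl]
  have h2 := rank_delete_duplicate_row B u v huv hcol
  have h3 : B.submatrix ((↑) : {w : V // w ≠ v} → V) id
      = Matrix.transpose (M.submatrix ((↑) : {w : V // w ≠ v} → V) ((↑) : {w : V // w ≠ v} → V)) := by
    ext i j
    simp [hB, Matrix.transpose_apply, Matrix.submatrix_apply]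
  rw [h3, Matrix.rank_transpose] at h2
  rw [hB, Matrix.rank_transpose] at h2
  rw [← h1, ← h2]
end

section
/- Let G be a finite simple graph in which no two distinct vertices have the same neighborhood (G is reduced), and let H be an induced subgraph of G with r(H) = r(G). If u and v are two distinct vertices of G outside H that are not adjacent in G, then the neighborhoods of u and v restricted to the vertex set of H are distinct. -/
open Matrix

theorem neighborSet_inter_ne_of_not_adj {V : Type*} [Fintype V]
    (G : SimpleGraph V) [DecidableRel G.Adj]
    (hred : ∀ x y : V, G.neighborSet x = G.neighborSet y → x = y)
    (s : Set V) [Fintype s]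
    (hrank : ((G.adjMatrix ℚ).submatrix ((↑) : s → V) ((↑) : s → V)).rank
      = (G.adjMatrix ℚ).rank)
    (u v : V) (hu : u ∉ s) (hv : v ∉ s) (huv : u ≠ v) (hadj : ¬ G.Adj u v) :
    G.neighborSet u ∩ s ≠ G.neighborSet v ∩ s := by
  classical
  intro heq
  set A := G.adjMatrix ℚ with hA
  set B : Matrix s V ℚ := A.submatrix ((↑) : s → V) id with hB
  -- rank B = rank A
  have hfact1 : ((1 : Matrix V V ℚ).submatrix ((↑) : s → V) (Equiv.refl V)) * A = B := by
    rw [one_submatrix_mul]; rfl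
  have h1 : B.rank ≤ A.rank := by
    rw [← hfact1]; exact Matrix.rank_mul_le_right _ _
  have hfact2 : B * ((1 : Matrix V V ℚ).submatrix (Equiv.refl V) ((↑) : s → V))
      = A.submatrix ((↑) : s → V) ((↑) : s → V) := by
    rw [mul_submatrix_one]; rfl
  have h2 : (A.submatrix ((↑) : s → V) ((↑) : s → V)).rank ≤ B.rank := by
    rw [← hfact2]; exact Matrix.rank_mul_le_left _ _
  have hBA : B.rank = A.rank := le_antisymm h1 (hrank ▸ h2)
  -- kernels are equal
  have hkerle : LinearMap.ker A.mulVecLin ≤ LinearMap.ker B.mulVecLin := by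
    intro x hx
    have hx' : A.mulVec x = 0 := hx
    show B.mulVec x = 0
    funext j
    have := congrFun hx' (j : V)
    simpa [Matrix.mulVec, dotProduct, hB] using this
  have hker : LinearMap.ker A.mulVecLin = LinearMap.ker B.mulVecLin := by
    apply Submodule.eq_of_le_of_finrank_eq hkerle
    have e1 := LinearMap.finrank_range_add_finrank_ker A.mulVecLin
    have e2 := LinearMap.finrank_range_add_finrank_ker B.mulVecLin
    have hr1 : A.rank = Module.finrank ℚ (LinearMap.range A.mulVecLin) := rfl
    have hr2 : B.rank = Module.finrank ℚ (LinearMap.range B.mulVecLin) := rfl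
    omega
  -- the test vector
  set x : V → ℚ := fun k => if k = u then 1 else if k = v then -1 else 0 with hx
  have hmul : ∀ k : V, A.mulVec x k = A k u - A k v := by
    intro k
    have : ∀ m : V, A k m * x m = (if m = u then A k u else 0)
        + (if m = v then -(A k v) else 0) := by
      intro m
      by_cases h1 : m = u <;> by_cases h2 : m = v <;>
        simp [hx, h1, h2, huv] <;> subst_vars <;> simp_all <;> ring
    simp only [Matrix.mulVec, dotProduct, this, Finset.sum_add_distrib,
      Finset.sum_ite_eq', Finset.mem_univ, if_true]
    ring
  have hxB : x ∈ LinearMap.ker B.mulVecLin := by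
    show B.mulVec x = 0
    funext j
    have hj : A (j : V) u = A (j : V) v := by
      have hmem : (j : V) ∈ G.neighborSet u ∩ s ↔ (j : V) ∈ G.neighborSet v ∩ s := by
        rw [heq]
      simp only [Set.mem_inter_iff, SimpleGraph.mem_neighborSet, j.2, and_true] at hmem
      by_cases hju : G.Adj u ((j : V))
      · have := hmem.1 hju
        simp [hA, SimpleGraph.adjMatrix, hju.symm, this.symm]
      · have h2 : ¬ G.Adj v ((j : V)) := fun h => hju (hmem.2 h)
        have : ¬ G.Adj ((j:V)) u := fun h => hju h.symm
        have h2' : ¬ G.Adj ((j:V)) v := fun h => h2 h.symm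
        simp [hA, SimpleGraph.adjMatrix, this, h2']
    have : B.mulVec x j = A.mulVec x (j : V) := by
      simp [Matrix.mulVec, dotProduct, hB]
    rw [this, hmul, hj]
    simp
  have hxA : x ∈ LinearMap.ker A.mulVecLin := hker ▸ hxB
  have hxA' : A.mulVec x = 0 := hxA
  have hall : ∀ k : V, A k u = A k v := by
    intro k
    have := congrFun hxA' k
    rw [hmul k] at this
    simp only [Pi.zero_apply] at this
    linarith
  have : G.neighborSet u = G.neighborSet v := by
    ext k
    have := hall k
    simp only [hA, SimpleGraph.adjMatrix_apply] at this
    rw [SimpleGraph.mem_neighborSet, SimpleGraph.mem_neighborSet,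
      G.adj_comm u k, G.adj_comm v k]
    by_cases h1 : G.Adj k u <;> by_cases h2 : G.Adj k v <;> simp [h1, h2] at this ⊢
  exact huv (hred u v this)
end

section
/- Let G be a finite simple graph in which no two distinct vertices have the same neighborhood, and let H be an induced subgraph of G with r(H) = r(G). If v is a vertex of G not in H, then for every vertex u of H, the neighborhood of v restricted to H differs from the neighborhood of u restricted to H. -/
open Matrix

/-- Extension by zero from functions on a subtype to functions on the whole type. -/
def extByZero {V : Type*} (s : Set V) [DecidablePred (· ∈ s)] :
    (s → ℚ) →ₗ[ℚ] (V → ℚ) where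
  toFun x j := if h : j ∈ s then x ⟨j, h⟩ else 0
  map_add' x y := by
    funext j
    by_cases h : j ∈ s <;> simp [h]
  map_smul' c x := by
    funext j
    by_cases h : j ∈ s <;> simp [h]

theorem neighborSet_inter_ne_of_outside {V : Type*} [Fintype V]
    (G : SimpleGraph V) [DecidableRel G.Adj]
    (hred : ∀ x y : V, G.neighborSet x = G.neighborSet y → x = y)
    (s : Set V) [Fintype s]
    (hrank : ((G.adjMatrix ℚ).submatrix ((↑) : s → V) ((↑) : s → V)).rank
      = (G.adjMatrix ℚ).rank)
    (v : V) (hv : v ∉ s) :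
    ∀ u ∈ s, G.neighborSet v ∩ s ≠ G.neighborSet u ∩ s := by
  classical
  intro u hu heq
  set A := G.adjMatrix ℚ with hA
  set B := A.submatrix id ((↑) : s → V) with hB
  -- B.mulVecLin factors through A.mulVecLin
  have hBA : ∀ x : s → ℚ, B.mulVec x = A.mulVec (extByZero s x) := by
    intro x
    funext w
    show ∑ j : s, B w j * x j = ∑ j : V, A w j * (extByZero s x) j
    have hzero : ∀ j ∈ Finset.univ, j ∉ s.toFinset →
        A w j * (extByZero s x) j = 0 := by
      intro j _ hj
      rw [Set.mem_toFinset] at hj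
      simp [extByZero, hj]
    rw [← Finset.sum_subset (Finset.subset_univ s.toFinset) hzero,
      ← Finset.sum_set_coe (f := fun j => A w j * (extByZero s x) j)]
    refine Finset.sum_congr rfl fun j _ => ?_
    simp [extByZero, hB, j.2]
  -- range inclusion
  have hle : LinearMap.range B.mulVecLin ≤ LinearMap.range A.mulVecLin := by
    rintro y ⟨x, rfl⟩
    exact ⟨extByZero s x, (hBA x).symm⟩
  -- A[s,s] factors through B: its mulVecLin is restriction ∘ B.mulVecLin
  have hSB : ∀ x : s → ℚ,
      (A.submatrix ((↑) : s → V) ((↑) : s → V)).mulVec x = fun j : s => B.mulVec x ↑j := by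
    intro x
    funext j
    simp [mulVec, dotProduct, hB]
  -- rank A[s,s] ≤ rank B
  have h1 : (A.submatrix ((↑) : s → V) ((↑) : s → V)).rank ≤ B.rank := by
    have hmap : LinearMap.range (A.submatrix ((↑) : s → V) ((↑) : s → V)).mulVecLin
        = Submodule.map (LinearMap.funLeft ℚ ℚ ((↑) : s → V))
          (LinearMap.range B.mulVecLin) := by
      ext y
      constructor
      · rintro ⟨x, rfl⟩
        exact ⟨B.mulVec x, ⟨x, rfl⟩, (hSB x).symm⟩
      · rintro ⟨z, ⟨x, rfl⟩, rfl⟩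
        exact ⟨x, hSB x⟩
    rw [Matrix.rank, Matrix.rank, hmap]
    exact Submodule.finrank_map_le _ _
  -- rank B ≤ rank A
  have h2 : B.rank ≤ A.rank := Submodule.finrank_mono hle
  -- hence rank B = rank A, so ranges are equal
  have h3 : B.rank = A.rank := le_antisymm h2 (hrank ▸ h1)
  have hrange : LinearMap.range B.mulVecLin = LinearMap.range A.mulVecLin :=
    Submodule.eq_of_le_of_finrank_eq hle h3
  -- rows u and v of B are equal
  have hrow : ∀ j : s, B u j = B v j := by
    intro j
    have hvj : (↑j ∈ G.neighborSet v ∩ s) ↔ (↑j ∈ G.neighborSet u ∩ s) := by rw [heq]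
    simp only [Set.mem_inter_iff, SimpleGraph.mem_neighborSet, j.2, and_true] at hvj
    simp [hB, hA, SimpleGraph.adjMatrix_apply, hvj]
  -- hence rows u and v of A are equal
  have hArow : ∀ w : V, A u w = A v w := by
    intro w
    have hcol : A.mulVec (Pi.single w 1) ∈ LinearMap.range A.mulVecLin := ⟨_, rfl⟩
    rw [← hrange] at hcol
    obtain ⟨x, hx⟩ := hcol
    have hx' : B.mulVec x = A.mulVec (Pi.single w 1) := hx
    have h4 : B.mulVec x u = B.mulVec x v := by
      simp only [mulVec, dotProduct]
      exact Finset.sum_congr rfl fun j _ => by rw [hrow j]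
    rw [hx'] at h4
    simpa using h4
  -- so neighborSets coincide, contradiction with reducedness
  have hN : G.neighborSet u = G.neighborSet v := by
    ext w
    have := hArow w
    simp only [hA, SimpleGraph.adjMatrix_apply] at this
    by_cases h : G.Adj u w
    · simp only [h, if_true] at this
      simp only [SimpleGraph.mem_neighborSet, h, true_iff]
      by_contra h'
      rw [if_neg h'] at this
      exact one_ne_zero this
    · simp only [h, if_false] at this
      simp only [SimpleGraph.mem_neighborSet, h, false_iff]
      intro h'
      rw [if_pos h'] at this
      exact one_ne_zero this.symm
  exact hv (hred u v hN ▸ hu)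
end

section
/- Let A be a symmetric matrix over ℚ of the block form [[0, θ, α],[θ, 0, β],[αᵀ, βᵀ, B]] where θ ∈ {0,1}, B is an invertible symmetric k×k matrix, and rank(A) = rank(B) = k. Let Ã be the matrix obtained from A by replacing θ with 1−θ in both off-diagonal positions. Then rank(Ã) = k + 2. -/
open scoped Matrix
theorem rank_flip_entry_eq_add_two (k : ℕ) (θ : ℚ) (hθ : θ = 0 ∨ θ = 1)
    (α β : Fin k → ℚ) (B : Matrix (Fin k) (Fin k) ℚ)
    (hBsymm : B.IsSymm) (hBunit : IsUnit B)
    (hBrank : B.rank = k)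
    (hArank : (Matrix.fromBlocks !![0, θ; θ, 0] (Matrix.of ![α, β])
        (Matrix.of ![α, β])ᵀ B).rank = k) :
    (Matrix.fromBlocks !![0, 1 - θ; 1 - θ, 0] (Matrix.of ![α, β])
        (Matrix.of ![α, β])ᵀ B).rank = k + 2 := by
  classical
  open Matrix in
  obtain ⟨iB⟩ := hBunit.nonempty_invertible
  set D : Matrix (Fin 2) (Fin k) ℚ := Matrix.of ![α, β] with hD
  have hdetB : IsUnit B.det := (Matrix.isUnit_iff_isUnit_det B).mp hBunit
  have decomp : ∀ C : Matrix (Fin 2) (Fin 2) ℚ,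
      (Matrix.fromBlocks C D Dᵀ B).rank =
        (Matrix.fromBlocks (C - D * ⅟B * Dᵀ) 0 0 B).rank := by
    intro C
    rw [Matrix.fromBlocks_eq_of_invertible₂₂ C D Dᵀ B]
    rw [Matrix.rank_mul_eq_left_of_isUnit_det, Matrix.rank_mul_eq_right_of_isUnit_det]
    · simp [Matrix.det_fromBlocks_zero₂₁]
    · simp [Matrix.det_fromBlocks_zero₂₁]
  have hS0 : !![0, θ; θ, 0] - D * ⅟B * Dᵀ = 0 := by
    by_contra hne
    obtain ⟨i, j, hij⟩ : ∃ i j, (!![0, θ; θ, 0] - D * ⅟B * Dᵀ) i j ≠ 0 := by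
      by_contra h
      push_neg at h
      exact hne (Matrix.ext h)
    set S : Matrix (Fin 2) (Fin 2) ℚ := !![0, θ; θ, 0] - D * ⅟B * Dᵀ with hS
    set P : Matrix (Unit ⊕ Fin k) (Fin 2 ⊕ Fin k) ℚ :=
      Matrix.fromBlocks (Matrix.of fun _ j' => if j' = i then (1:ℚ) else 0) 0 0 1 with hP
    set Q : Matrix (Fin 2 ⊕ Fin k) (Unit ⊕ Fin k) ℚ :=
      Matrix.fromBlocks (Matrix.of fun i' _ => if i' = j then (1:ℚ) else 0) 0 0 1 with hQ
    have hblk : (Matrix.of fun (_ : Unit) j' => if j' = i then (1:ℚ) else 0) * S *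
        (Matrix.of fun i' (_ : Unit) => if i' = j then (1:ℚ) else 0) =
        (Matrix.of fun _ _ => S i j) := by
      ext a b
      simp [Matrix.mul_apply, Finset.sum_ite_eq, ite_mul, mul_ite]
    have hPQ : P * Matrix.fromBlocks S 0 0 B * Q =
        Matrix.fromBlocks (Matrix.of fun _ _ => S i j) 0 0 B := by
      rw [hP, hQ, Matrix.fromBlocks_multiply, Matrix.fromBlocks_multiply]
      simp only [Matrix.mul_zero, Matrix.zero_mul, Matrix.mul_one, Matrix.one_mul,
        add_zero, zero_add]
      rw [hblk]
    have hunit : IsUnit (Matrix.fromBlocks (Matrix.of fun (_ : Unit) (_ : Unit) => S i j) 0 0 B) := by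
      rw [Matrix.isUnit_iff_isUnit_det, Matrix.det_fromBlocks_zero₂₁]
      refine IsUnit.mul ?_ hdetB
      rw [Matrix.det_unique]
      exact isUnit_iff_ne_zero.mpr hij
    have h1 : (P * Matrix.fromBlocks S 0 0 B * Q).rank = 1 + k := by
      rw [hPQ, Matrix.rank_of_isUnit _ hunit]
      simp
    have h2 : (P * Matrix.fromBlocks S 0 0 B * Q).rank ≤ k := by
      calc (P * Matrix.fromBlocks S 0 0 B * Q).rank
          ≤ (P * Matrix.fromBlocks S 0 0 B).rank := Matrix.rank_mul_le_left _ _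
        _ ≤ (Matrix.fromBlocks S 0 0 B).rank := Matrix.rank_mul_le_right _ _
        _ = k := by rw [← decomp, hArank]
    omega
  have hDBD : D * ⅟B * Dᵀ = !![0, θ; θ, 0] := by
    have := sub_eq_zero.mp hS0
    exact this.symm
  have key : !![0, 1 - θ; 1 - θ, 0] - D * ⅟B * Dᵀ = !![0, 1 - 2*θ; 1 - 2*θ, 0] := by
    rw [hDBD]
    ext a b
    fin_cases a <;> fin_cases b <;> simp <;> ring
  rw [decomp, key]
  have hdetS : IsUnit (!![0, 1 - 2*θ; 1 - 2*θ, 0]).det := by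
    rcases hθ with h | h <;> subst h <;> norm_num [Matrix.det_fin_two]
  have hU : IsUnit (Matrix.fromBlocks !![0, 1 - 2*θ; 1 - 2*θ, 0] 0 0 B) := by
    rw [Matrix.isUnit_iff_isUnit_det, Matrix.det_fromBlocks_zero₂₁]
    exact hdetS.mul hdetB
  rw [Matrix.rank_of_isUnit _ hU]
  simp
  omega
end
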